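/- Let μ be a weight measure over a finite alphabet Σ with values in a linearly ordered cancellative commutative monoid A and let w ∈ Σ*. Then w is μ-prefix normal if and only if for every factor v of w one has minpos_{w,μ}(μ(v)) ≤ |v|, where minpos_{w,μ}(x) = min{ k ∈ {0,…,|w|} : p_{w,μ}(k) ≥ x } (which is well defined for x = μ(v) since μ(v) ≤ μ(w)). -/

import Mathlib

/-- The weight of a word: the product of the weights of its letters. -/
def weight {α A : Type*} [CommMonoid A] [LinearOrder A] [IsOrderedCancelMonoid A] (μ : α → A) (w : List α) : A :=
  (w.map μ).prod

/-- The factor-weight function: `factorWeight μ w i` is the maximum weight of a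
length-`i` factor (contiguous subword) of `w`. -/
def factorWeight {α A : Type*} [CommMonoid A] [LinearOrder A] [IsOrderedCancelMonoid A] (μ : α → A)
    (w : List α) (i : ℕ) : A :=
  ((List.range (w.length + 1 - i)).map fun j => weight μ ((w.drop j).take i)).foldr max 1

/-- A word is `μ`-prefix normal if its factor-weight function agrees with its
prefix-weight function. -/
def PrefixNormal {α A : Type*} [CommMonoid A] [LinearOrder A] [IsOrderedCancelMonoid A] (μ : α → A)
    (w : List α) : Prop :=
  ∀ i ≤ w.length, factorWeight μ w i = weight μ (w.take i)

/-- A weight measure is gapfree if for every word `w` and every `1 ≤ i ≤ |w|` there is a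
letter `a` with `f_{w,μ}(i) = f_{w,μ}(i-1) * μ a`. -/
def Gapfree {α A : Type*} [CommMonoid A] [LinearOrder A] [IsOrderedCancelMonoid A] (μ : α → A) : Prop :=
  ∀ w : List α, ∀ i, 1 ≤ i → i ≤ w.length →
    ∃ a : α, factorWeight μ w i = factorWeight μ w (i - 1) * μ a

/-- `pnClass μ w` is the set `P_μ(w)` of words that are factor-weight equivalent to `w`
and `μ`-prefix normal. -/
def pnClass {α A : Type*} [CommMonoid A] [LinearOrder A] [IsOrderedCancelMonoid A] (μ : α → A)
    (w : List α) : Set (List α) :=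
  {v | (∀ i, factorWeight μ v i = factorWeight μ w i) ∧ PrefixNormal μ v}

/-- The min-position function: `minpos μ w x = min { k ∈ {0,…,|w|} : p_{w,μ}(k) ≥ x }`. -/
noncomputable def minpos {α A : Type*} [CommMonoid A] [LinearOrder A] [IsOrderedCancelMonoid A] (μ : α → A)
    (w : List α) (x : A) : ℕ :=
  sInf {k | k ≤ w.length ∧ x ≤ weight μ (w.take k)}

section Aux
variable {α A : Type*} [CommMonoid A] [LinearOrder A] [IsOrderedCancelMonoid A] (μ : α → A)

lemma one_le_weight (hμ : ∀ a : α, 1 < μ a) (u : List α) : 1 ≤ weight μ u := by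
  induction u with
  | nil => simp [weight]
  | cons a t ih =>
    simp only [weight, List.map_cons, List.prod_cons] at *
    exact one_le_mul (hμ a).le ih

lemma weight_append (u v : List α) : weight μ (u ++ v) = weight μ u * weight μ v := by
  simp [weight]

lemma weight_take_le (hμ : ∀ a : α, 1 < μ a) (u : List α) (k : ℕ) :
    weight μ (u.take k) ≤ weight μ u := by
  conv_rhs => rw [← List.take_append_drop k u]
  rw [weight_append]
  exact le_mul_of_one_le_right' (one_le_weight μ hμ _)

lemma weight_take_mono (hμ : ∀ a : α, 1 < μ a) (u : List α) {k i : ℕ} (h : k ≤ i) :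
    weight μ (u.take k) ≤ weight μ (u.take i) := by
  have := weight_take_le μ hμ (u.take i) k
  rwa [List.take_take, min_eq_left h] at this

lemma weight_le_of_infix (hμ : ∀ a : α, 1 < μ a) {v u : List α} (h : v <:+: u) :
    weight μ v ≤ weight μ u := by
  obtain ⟨s, t, rfl⟩ := h
  rw [weight_append, weight_append]
  calc weight μ v ≤ weight μ v * weight μ t := le_mul_of_one_le_right' (one_le_weight μ hμ _)
    _ ≤ weight μ s * (weight μ v * weight μ t) := le_mul_of_one_le_left' (one_le_weight μ hμ _)
    _ = weight μ s * weight μ v * weight μ t := (mul_assoc _ _ _).symm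

lemma le_foldr_max {a : A} {l : List A} (h : a ∈ l) : a ≤ l.foldr max 1 := by
  induction l with
  | nil => simp at h
  | cons b t ih =>
    rcases List.mem_cons.1 h with rfl | h
    · exact le_max_left _ _
    · exact (ih h).trans (le_max_right _ _)

lemma foldr_max_le {b : A} {l : List A} (h1 : 1 ≤ b) (h : ∀ a ∈ l, a ≤ b) :
    l.foldr max 1 ≤ b := by
  induction l with
  | nil => simpa
  | cons c t ih =>
    exact max_le (h c (List.mem_cons_self (a := c) (l := t))) (ih fun a ha => h a (List.mem_cons_of_mem _ ha))

lemma weight_le_factorWeight (w : List α) {i j : ℕ} (hj : j < w.length + 1 - i) :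
    weight μ ((w.drop j).take i) ≤ factorWeight μ w i :=
  le_foldr_max (List.mem_map_of_mem (List.mem_range.2 hj))

lemma factorWeight_le (w : List α) {i : ℕ} {b : A} (h1 : 1 ≤ b)
    (h : ∀ j < w.length + 1 - i, weight μ ((w.drop j).take i) ≤ b) :
    factorWeight μ w i ≤ b := by
  apply foldr_max_le h1
  intro a ha
  obtain ⟨j, hj, rfl⟩ := List.mem_map.1 ha
  exact h j (List.mem_range.1 hj)

end Aux

/-- A word is `μ`-prefix normal iff for every factor `v` of `w` one has
`minpos_{w,μ}(μ(v)) ≤ |v|`. -/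
theorem prefixNormal_iff_minpos {α A : Type*} [Fintype α]
    [CommMonoid A] [LinearOrder A] [IsOrderedCancelMonoid A] (μ : α → A) (hμ : ∀ a : α, 1 < μ a)
    (w : List α) :
    PrefixNormal μ w ↔ ∀ v : List α, v <:+: w → minpos μ w (weight μ v) ≤ v.length := by
  constructor
  · intro hpn v hv
    obtain ⟨s, t, rfl⟩ := hv
    have hvw : v.length ≤ (s ++ v ++ t).length := by simp; omega
    have hjlt : s.length < (s ++ v ++ t).length + 1 - v.length := by simp; omega
    have hfac : weight μ v ≤ factorWeight μ (s ++ v ++ t) v.length := by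
      have hd : ((s ++ v ++ t).drop s.length).take v.length = v := by
        rw [List.append_assoc, List.drop_left, List.take_left]
      have key := weight_le_factorWeight μ (s ++ v ++ t) hjlt
      rwa [hd] at key
    apply Nat.sInf_le
    refine ⟨hvw, ?_⟩
    rw [← hpn v.length hvw]
    exact hfac
  · intro h i hi
    apply le_antisymm
    · apply factorWeight_le μ w (one_le_weight μ hμ _)
      intro j hj
      set u := (w.drop j).take i with hu
      have hui : u.length = i := by
        simp [hu]; omega
      have huinf : u <:+: w :=
        ((w.drop j).take_prefix i).isInfix.trans (w.drop_suffix j).isInfix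
      have hmp := h u huinf
      have hne : minpos μ w (weight μ u) ∈
          {k | k ≤ w.length ∧ weight μ u ≤ weight μ (w.take k)} := by
        apply Nat.sInf_mem
        exact ⟨w.length, le_refl _, by
          rw [List.take_length]; exact weight_le_of_infix μ hμ huinf⟩
      obtain ⟨hk1, hk2⟩ := hne
      calc weight μ u ≤ weight μ (w.take (minpos μ w (weight μ u))) := hk2
        _ ≤ weight μ (w.take i) := weight_take_mono μ hμ w (hui ▸ hmp)
    · have h0 : (0:ℕ) < w.length + 1 - i := by omega
      have := weight_le_factorWeight μ w h0
      simpa using this
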